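/- Fix ℏ > 0 and let ψ, φ : ℝ → ℂ be Schwartz functions that are orthogonal in L²(ℝ), i.e., ∫_ℝ conj(ψ(x)) φ(x) dx = 0. Then their Wigner functions are orthogonal in phase space: ∫_ℝ ∫_ℝ W_ψ(q, p) W_φ(q, p) dq dp = 0. -/

import Mathlib

open MeasureTheory

/-- The Wigner function of `ψ : ℝ → ℂ` (with Planck constant `h`):
`W_ψ(q,p) = (1/(2π)) ∫ conj(ψ(q + h s/2)) ψ(q − h s/2) e^{i p s} ds`. -/
noncomputable def wigner (h : ℝ) (ψ : ℝ → ℂ) (q p : ℝ) : ℂ :=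
  (1 / (2 * Real.pi) : ℂ) *
    ∫ s : ℝ, (starRingEnd ℂ) (ψ (q + h * s / 2)) * ψ (q - h * s / 2) *
      Complex.exp (Complex.I * (p : ℂ) * (s : ℂ))

open FourierTransform Real SchwartzMap Complex

namespace WigAux

lemma two_point (c q s : ℝ) (hc : 0 < c) :
    (1 + q ^ 2) * (1 + s ^ 2) ≤
      max 1 (c⁻¹ ^ 2) * ((1 + (q + c * s) ^ 2) ^ 2 * (1 + (q - c * s) ^ 2) ^ 2) := by
  set u := q + c * s with hu
  set v := q - c * s with hv
  set M := max 1 (c⁻¹ ^ 2) with hM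
  have hM1 : (1:ℝ) ≤ M := le_max_left _ _
  have hMc : c⁻¹ ^ 2 ≤ M := le_max_right _ _
  have hMpos : (0:ℝ) < M := lt_of_lt_of_le one_pos hM1
  have h0 : (1 + q ^ 2) * (1 + c ^ 2 * s ^ 2) ≤ (1 + q ^ 2 + c ^ 2 * s ^ 2) ^ 2 := by
    nlinarith [sq_nonneg q, sq_nonneg (c * s)]
  have h1 : 1 + q ^ 2 + c ^ 2 * s ^ 2 ≤ (1 + u ^ 2) * (1 + v ^ 2) := by
    have : u ^ 2 + v ^ 2 = 2 * (q ^ 2 + c ^ 2 * s ^ 2) := by rw [hu, hv]; ring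
    nlinarith [sq_nonneg (u * v), sq_nonneg u, sq_nonneg v]
  have h2 : (1 + q ^ 2) * (1 + c ^ 2 * s ^ 2) ≤ ((1 + u ^ 2) * (1 + v ^ 2)) ^ 2 := by
    refine h0.trans ?_
    exact pow_le_pow_left₀ (by positivity) h1 2
  have h3 : 1 + s ^ 2 ≤ M * (1 + c ^ 2 * s ^ 2) := by
    have hcc : c⁻¹ ^ 2 * (c ^ 2 * s ^ 2) = s ^ 2 := by field_simp
    nlinarith [mul_le_mul_of_nonneg_right hMc (by positivity : (0:ℝ) ≤ c ^ 2 * s ^ 2)]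
  calc (1 + q ^ 2) * (1 + s ^ 2) ≤ (1 + q ^ 2) * (M * (1 + c ^ 2 * s ^ 2)) :=
        mul_le_mul_of_nonneg_left h3 (by positivity)
    _ = M * ((1 + q ^ 2) * (1 + c ^ 2 * s ^ 2)) := by ring
    _ ≤ M * ((1 + u ^ 2) * (1 + v ^ 2)) ^ 2 := mul_le_mul_of_nonneg_left h2 hMpos.le
    _ = M * ((1 + u ^ 2) ^ 2 * (1 + v ^ 2) ^ 2) := by ring

lemma decay4 (f : SchwartzMap ℝ ℂ) : ∃ C, 0 ≤ C ∧ ∀ x : ℝ, ‖f x‖ * (1 + x ^ 2) ^ 2 ≤ C := by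
  obtain ⟨C0, hC0, h0⟩ := f.decay 0 0
  obtain ⟨C2, hC2, h2⟩ := f.decay 2 0
  obtain ⟨C4, hC4, h4⟩ := f.decay 4 0
  refine ⟨C0 + 2 * C2 + C4, by positivity, fun x => ?_⟩
  have e0 := h0 x
  have e2 := h2 x
  have e4 := h4 x
  simp only [norm_iteratedFDeriv_zero, pow_zero, one_mul, Real.norm_eq_abs] at e0 e2 e4
  have hx2 : |x| ^ 2 = x ^ 2 := sq_abs x
  have hx4 : |x| ^ 4 = (x ^ 2) ^ 2 := by
    rw [show (4:ℕ) = 2 * 2 by rfl, pow_mul, hx2]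
  rw [hx2] at e2
  rw [hx4] at e4
  nlinarith [norm_nonneg (f x), sq_nonneg x]

/-- The elementary building block `s ↦ conj (f (q + c s)) * g (q - c s)`. -/
noncomputable def T (c : ℝ) (f g : SchwartzMap ℝ ℂ) (q : ℝ) : ℝ → ℂ :=
  fun s => (starRingEnd ℂ) (f (q + c * s)) * g (q - c * s)

lemma T_cont (c : ℝ) (f g : SchwartzMap ℝ ℂ) (q : ℝ) : Continuous (T c f g q) := by
  apply Continuous.mul
  · exact Complex.continuous_conj.comp (f.continuous.comp (by continuity))
  · exact g.continuous.comp (by continuity)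

lemma T_norm (c : ℝ) (f g : SchwartzMap ℝ ℂ) (q s : ℝ) :
    ‖T c f g q s‖ = ‖f (q + c * s)‖ * ‖g (q - c * s)‖ := by
  rw [T, norm_mul, RCLike.norm_conj]

lemma T_bound (c : ℝ) (hc : 0 < c) (f g : SchwartzMap ℝ ℂ) :
    ∃ C, 0 ≤ C ∧ ∀ q s : ℝ, ‖T c f g q s‖ ≤ C * ((1 + q ^ 2)⁻¹ * (1 + s ^ 2)⁻¹) := by
  obtain ⟨Cf, hCf, hf⟩ := decay4 f
  obtain ⟨Cg, hCg, hg⟩ := decay4 g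
  refine ⟨max 1 (c⁻¹ ^ 2) * (Cf * Cg), by positivity, fun q s => ?_⟩
  set u := q + c * s
  set v := q - c * s
  set M := max 1 (c⁻¹ ^ 2) with hM
  have hMpos : (0:ℝ) < M := lt_of_lt_of_le one_pos (le_max_left _ _)
  have h1 : ‖T c f g q s‖ * ((1 + u ^ 2) ^ 2 * (1 + v ^ 2) ^ 2) ≤ Cf * Cg := by
    rw [T_norm]
    calc ‖f u‖ * ‖g v‖ * ((1 + u ^ 2) ^ 2 * (1 + v ^ 2) ^ 2)
        = (‖f u‖ * (1 + u ^ 2) ^ 2) * (‖g v‖ * (1 + v ^ 2) ^ 2) := by ring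
      _ ≤ Cf * Cg := by
          apply mul_le_mul (hf u) (hg v) (by positivity)
          exact le_trans (by positivity) (hf u)
  have h2 : ‖T c f g q s‖ * ((1 + q ^ 2) * (1 + s ^ 2)) ≤ M * (Cf * Cg) := by
    calc ‖T c f g q s‖ * ((1 + q ^ 2) * (1 + s ^ 2))
        ≤ ‖T c f g q s‖ * (M * ((1 + u ^ 2) ^ 2 * (1 + v ^ 2) ^ 2)) :=
          mul_le_mul_of_nonneg_left (two_point c q s hc) (norm_nonneg _)
      _ = M * (‖T c f g q s‖ * ((1 + u ^ 2) ^ 2 * (1 + v ^ 2) ^ 2)) := by ring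
      _ ≤ M * (Cf * Cg) := mul_le_mul_of_nonneg_left h1 hMpos.le
  have hD : (0:ℝ) < (1 + q ^ 2) * (1 + s ^ 2) := by positivity
  have := (le_div_iff₀ hD).2 h2
  rwa [div_eq_mul_inv, mul_inv] at this

lemma T_integrable (c : ℝ) (hc : 0 < c) (f g : SchwartzMap ℝ ℂ) (q : ℝ) :
    Integrable (T c f g q) := by
  obtain ⟨C, hC, hb⟩ := T_bound c hc f g
  have hbase : Integrable (fun s : ℝ => C * (1 + q ^ 2)⁻¹ * (1 + s ^ 2)⁻¹) :=
    integrable_inv_one_add_sq.const_mul _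
  refine Integrable.mono' hbase (T_cont c f g q).aestronglyMeasurable ?_
  filter_upwards with s
  calc ‖T c f g q s‖ ≤ C * ((1 + q ^ 2)⁻¹ * (1 + s ^ 2)⁻¹) := hb q s
    _ = C * (1 + q ^ 2)⁻¹ * (1 + s ^ 2)⁻¹ := by ring

lemma T_hasDerivAt (c : ℝ) (f g : SchwartzMap ℝ ℂ) (q s : ℝ) :
    HasDerivAt (T c f g q)
      ((c : ℂ) * T c (derivCLM ℝ ℂ f) g q s - (c : ℂ) * T c f (derivCLM ℝ ℂ g) q s) s := by
  have haff1 : HasDerivAt (fun s : ℝ => q + c * s) c s := by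
    simpa using ((hasDerivAt_id s).const_mul c).const_add q
  have haff2 : HasDerivAt (fun s : ℝ => q - c * s) (-c) s := by
    simpa using ((hasDerivAt_id s).const_mul c).const_sub q
  have hF : HasDerivAt (fun s : ℝ => f (q + c * s)) (c • deriv f (q + c * s)) s := by
    have := (f.differentiableAt.hasDerivAt (x := q + c * s)).scomp s haff1
    simpa [mul_comm, Function.comp_def] using this
  have hG : HasDerivAt (fun s : ℝ => g (q - c * s)) ((-c) • deriv g (q - c * s)) s := by
    have := (g.differentiableAt.hasDerivAt (x := q - c * s)).scomp s haff2
    simpa [Function.comp_def] using this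
  have hFc : HasDerivAt (fun s : ℝ => (starRingEnd ℂ) (f (q + c * s)))
      ((starRingEnd ℂ) (c • deriv f (q + c * s))) s := by
    exact (Complex.conjCLE.hasFDerivAt.comp_hasDerivAt s hF :)
  have := hFc.mul hG
  refine this.congr_deriv ?_
  simp only [T, derivCLM_apply, real_smul, map_mul, Complex.conj_ofReal, neg_smul, smul_eq_mul]
  push_cast
  ring

lemma norm_fourier_le (h : ℝ → ℂ) (ξ : ℝ) : ‖𝓕 h ξ‖ ≤ ∫ s : ℝ, ‖h s‖ :=
  VectorFourier.norm_fourierIntegral_le_integral_norm _ _ _ _ _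

lemma integral_norm_le (h : ℝ → ℂ) (hint : Integrable h) (B : ℝ)
    (hb : ∀ s : ℝ, ‖h s‖ ≤ B * (1 + s ^ 2)⁻¹) : ∫ s : ℝ, ‖h s‖ ≤ B * π := by
  have := integral_mono hint.norm (integrable_inv_one_add_sq.const_mul B) hb
  rwa [integral_const_mul, integral_univ_inv_one_add_sq] at this

lemma fourier_T_bound (c : ℝ) (hc : 0 < c) (f g : SchwartzMap ℝ ℂ) :
    ∃ C, 0 ≤ C ∧ ∀ q ξ : ℝ, ‖𝓕 (T c f g q) ξ‖ ≤ C * ((1 + q ^ 2)⁻¹ * (1 + ξ ^ 2)⁻¹) := by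
  set f' := derivCLM ℝ ℂ f
  set g' := derivCLM ℝ ℂ g
  set f'' := derivCLM ℝ ℂ f'
  set g'' := derivCLM ℝ ℂ g'
  obtain ⟨C1, hC1, hb1⟩ := T_bound c hc f g
  obtain ⟨Ca, hCa, hba⟩ := T_bound c hc f'' g
  obtain ⟨Cb, hCb, hbb⟩ := T_bound c hc f' g'
  obtain ⟨Cc, hCc, hbc⟩ := T_bound c hc f g''
  set K2 : ℝ := c ^ 2 * (Ca + 2 * Cb + Cc) with hK2
  have hK2nn : 0 ≤ K2 := by positivity
  refine ⟨π * C1 + K2 / (4 * π), by positivity, fun q ξ => ?_⟩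
  set u : ℝ → ℂ := T c f g q with hu
  set u1 : ℝ → ℂ := fun s => (c : ℂ) * T c f' g q s - (c : ℂ) * T c f g' q s with hu1
  set u2 : ℝ → ℂ :=
    fun s => (c : ℂ) ^ 2 * (T c f'' g q s - 2 * T c f' g' q s + T c f g'' q s) with hu2
  have hu1' : ∀ s, HasDerivAt u (u1 s) s := fun s => T_hasDerivAt c f g q s
  have hu2' : ∀ s, HasDerivAt u1 (u2 s) s := by
    intro s
    have h1 := (T_hasDerivAt c f' g q s).const_mul (c : ℂ)
    have h2 := (T_hasDerivAt c f g' q s).const_mul (c : ℂ)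
    refine (h1.sub h2).congr_deriv ?_
    simp only [hu2]
    ring
  have hderiv_u : deriv u = u1 := funext fun s => (hu1' s).deriv
  have hderiv_u1 : deriv u1 = u2 := funext fun s => (hu2' s).deriv
  have hu_int : Integrable u := T_integrable c hc f g q
  have hu1_int : Integrable u1 :=
    ((T_integrable c hc f' g q).const_mul _).sub ((T_integrable c hc f g' q).const_mul _)
  have hu2_int : Integrable u2 := by
    apply Integrable.const_mul
    exact ((T_integrable c hc f'' g q).sub
      ((T_integrable c hc f' g' q).const_mul 2)).add (T_integrable c hc f g'' q)
  have hu_diff : Differentiable ℝ u := fun s => (hu1' s).differentiableAt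
  have hu1_diff : Differentiable ℝ u1 := fun s => (hu2' s).differentiableAt
  have step1 : 𝓕 (deriv u) = fun ξ : ℝ => (2 * π * I * ξ) • 𝓕 u ξ :=
    Real.fourier_deriv hu_int hu_diff (hderiv_u ▸ hu1_int)
  have step2 : 𝓕 (deriv u1) = fun ξ : ℝ => (2 * π * I * ξ) • 𝓕 u1 ξ :=
    Real.fourier_deriv hu1_int hu1_diff (hderiv_u1 ▸ hu2_int)
  -- bound on ‖𝓕 u ξ‖
  have bound0 : ‖𝓕 u ξ‖ ≤ C1 * (1 + q ^ 2)⁻¹ * π := by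
    refine (norm_fourier_le u ξ).trans ?_
    exact integral_norm_le u hu_int _ (fun s => by
      have := hb1 q s; rw [hu]; nlinarith [this])
  -- bound on second derivative transform
  have bound2 : ‖𝓕 u2 ξ‖ ≤ K2 * (1 + q ^ 2)⁻¹ * π := by
    refine (norm_fourier_le u2 ξ).trans ?_
    refine integral_norm_le u2 hu2_int _ (fun s => ?_)
    have hnorm : ‖u2 s‖ ≤ c ^ 2 * (‖T c f'' g q s‖ + 2 * ‖T c f' g' q s‖ + ‖T c f g'' q s‖) := by
      rw [hu2]
      simp only [norm_mul, norm_pow, Complex.norm_real, Real.norm_eq_abs, abs_of_pos hc]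
      gcongr
      calc ‖T c f'' g q s - 2 * T c f' g' q s + T c f g'' q s‖
          ≤ ‖T c f'' g q s - 2 * T c f' g' q s‖ + ‖T c f g'' q s‖ := norm_add_le _ _
        _ ≤ ‖T c f'' g q s‖ + ‖2 * T c f' g' q s‖ + ‖T c f g'' q s‖ := by
            gcongr; exact norm_sub_le _ _
        _ = ‖T c f'' g q s‖ + 2 * ‖T c f' g' q s‖ + ‖T c f g'' q s‖ := by
            rw [norm_mul]; norm_num
    refine hnorm.trans ?_
    have := hba q s
    have := hbb q s
    have := hbc q s
    have hq : (0:ℝ) ≤ (1 + q ^ 2)⁻¹ := by positivity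
    have hs : (0:ℝ) ≤ (1 + s ^ 2)⁻¹ := by positivity
    rw [hK2]
    nlinarith [sq_nonneg c, mul_nonneg hq hs]
  -- relation : 𝓕 u2 ξ = (2πIξ)•(2πIξ)• 𝓕 u ξ
  have hrel : 𝓕 u2 ξ = (2 * π * I * ξ) • ((2 * π * I * ξ) • 𝓕 u ξ) := by
    calc 𝓕 u2 ξ = 𝓕 (deriv u1) ξ := by rw [hderiv_u1]
      _ = (2 * π * I * ξ) • 𝓕 u1 ξ := by rw [step2]
      _ = (2 * π * I * ξ) • 𝓕 (deriv u) ξ := by rw [hderiv_u]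
      _ = (2 * π * I * ξ) • ((2 * π * I * ξ) • 𝓕 u ξ) := by rw [step1]
  have hnorm_rel : ‖𝓕 u2 ξ‖ = (2 * π * |ξ|) ^ 2 * ‖𝓕 u ξ‖ := by
    rw [hrel, norm_smul, norm_smul]
    have : ‖2 * ↑π * I * ↑ξ‖ = 2 * π * |ξ| := by
      simp [norm_mul, Complex.norm_real, Real.norm_eq_abs, abs_of_pos Real.pi_pos]
    rw [this]; ring
  -- combine
  have hxi : ξ ^ 2 * ‖𝓕 u ξ‖ ≤ K2 / (4 * π) * (1 + q ^ 2)⁻¹ := by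
    have h4 : (2 * π * |ξ|) ^ 2 = 4 * π ^ 2 * ξ ^ 2 := by
      rw [mul_pow, mul_pow, _root_.sq_abs]; ring
    have := bound2
    rw [hnorm_rel, h4] at this
    have hπ : (0:ℝ) < π := Real.pi_pos
    rw [div_mul_eq_mul_div, le_div_iff₀ (by positivity : (0:ℝ) < 4 * π)]
    nlinarith [norm_nonneg (𝓕 u ξ), sq_nonneg ξ]
  have hfin : ‖𝓕 u ξ‖ * (1 + ξ ^ 2) ≤ (π * C1 + K2 / (4 * π)) * (1 + q ^ 2)⁻¹ := by
    have : ‖𝓕 u ξ‖ * (1 + ξ ^ 2) = ‖𝓕 u ξ‖ + ξ ^ 2 * ‖𝓕 u ξ‖ := by ring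
    rw [this]
    have b0 : ‖𝓕 u ξ‖ ≤ π * C1 * (1 + q ^ 2)⁻¹ := by
      refine bound0.trans (le_of_eq ?_); ring
    calc ‖𝓕 u ξ‖ + ξ ^ 2 * ‖𝓕 u ξ‖
        ≤ π * C1 * (1 + q ^ 2)⁻¹ + K2 / (4 * π) * (1 + q ^ 2)⁻¹ := add_le_add b0 hxi
      _ = (π * C1 + K2 / (4 * π)) * (1 + q ^ 2)⁻¹ := by ring
  have hpos : (0:ℝ) < 1 + ξ ^ 2 := by positivity
  have := (le_div_iff₀ hpos).2 hfin
  calc ‖𝓕 u ξ‖ ≤ (π * C1 + K2 / (4 * π)) * (1 + q ^ 2)⁻¹ / (1 + ξ ^ 2) := this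
    _ = (π * C1 + K2 / (4 * π)) * ((1 + q ^ 2)⁻¹ * (1 + ξ ^ 2)⁻¹) := by
        rw [div_eq_mul_inv]; ring

lemma wigner_eq (h : ℝ) (f : SchwartzMap ℝ ℂ) (q p : ℝ) :
    wigner h (⇑f) q p = (1 / (2 * ↑π) : ℂ) * 𝓕 (T (h / 2) f f q) (-p / (2 * π)) := by
  rw [wigner, Real.fourier_real_eq_integral_exp_smul]
  congr 1
  refine integral_congr_ae (Filter.Eventually.of_forall fun s => ?_)
  simp only [T]
  have h1 : q + h * s / 2 = q + h / 2 * s := by ring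
  have h2 : q - h * s / 2 = q - h / 2 * s := by ring
  rw [h1, h2]
  have harg : -2 * π * s * (-p / (2 * π)) = p * s := by
    field_simp
  rw [harg, smul_eq_mul, mul_comm]
  congr 1
  push_cast
  ring_nf

lemma fourier_cont (h : ℝ → ℂ) (hint : Integrable h) : Continuous (𝓕 h) :=
  VectorFourier.fourierIntegral_continuous Real.continuous_fourierChar
    (by exact continuous_inner) hint

lemma fourier_T_integrable (c : ℝ) (hc : 0 < c) (f g : SchwartzMap ℝ ℂ) (q : ℝ) :
    Integrable (𝓕 (T c f g q)) := by
  obtain ⟨C, hC, hb⟩ := fourier_T_bound c hc f g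
  have hbase : Integrable (fun ξ : ℝ => C * (1 + q ^ 2)⁻¹ * (1 + ξ ^ 2)⁻¹) :=
    integrable_inv_one_add_sq.const_mul _
  refine Integrable.mono' hbase
    (fourier_cont _ (T_integrable c hc f g q)).aestronglyMeasurable ?_
  filter_upwards with ξ
  calc ‖𝓕 (T c f g q) ξ‖ ≤ C * ((1 + q ^ 2)⁻¹ * (1 + ξ ^ 2)⁻¹) := hb q ξ
    _ = C * (1 + q ^ 2)⁻¹ * (1 + ξ ^ 2)⁻¹ := by ring

lemma innerl_flip : (innerₗ ℝ).flip = innerₗ ℝ := by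
  apply LinearMap.ext; intro x; apply LinearMap.ext; intro y
  simp [real_inner_comm]

lemma parseval_aux (U V : ℝ → ℂ) (hU : Integrable U) (hV : Integrable V)
    (hVc : Continuous V) (hFV : Integrable (𝓕 V)) :
    ∫ p : ℝ, 𝓕 U (-p / (2 * π)) * 𝓕 V (-p / (2 * π)) =
      (2 * π : ℝ) • ∫ s : ℝ, U s * V (-s) := by
  have h1 : ∫ p : ℝ, 𝓕 U (-p / (2 * π)) * 𝓕 V (-p / (2 * π)) =
      (2 * π : ℝ) • ∫ t : ℝ, 𝓕 U t * 𝓕 V t := by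
    have harg : ∀ p : ℝ, -p / (2 * π) = -(2 * π)⁻¹ * p := fun p => by ring
    simp_rw [harg]
    rw [Measure.integral_comp_mul_left (fun t => 𝓕 U t * 𝓕 V t) (-(2 * π)⁻¹)]
    congr 1
    rw [inv_neg, inv_inv, abs_neg, abs_of_pos (by positivity)]
  rw [h1]
  congr 1
  -- multiplication formula
  have hmul := VectorFourier.integral_fourierIntegral_smul_eq_flip
    (e := Real.fourierChar) (L := innerₗ ℝ) (μ := volume) (ν := volume)
    Real.continuous_fourierChar (by exact continuous_inner) hU hFV
  rw [innerl_flip] at hmul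
  simp only [smul_eq_mul] at hmul
  rw [show (𝓕 U : ℝ → ℂ) = VectorFourier.fourierIntegral 𝐞 volume (innerₗ ℝ) U from rfl,
    hmul]
  refine integral_congr_ae (Filter.Eventually.of_forall fun s => ?_)
  show U s * VectorFourier.fourierIntegral 𝐞 volume (innerₗ ℝ) (𝓕 V) s = U s * V (-s)
  congr 1
  -- 𝓕 (𝓕 V) s = V (-s)
  have hinv := hVc.fourierInv_fourier_eq hV hFV
  calc VectorFourier.fourierIntegral 𝐞 volume (innerₗ ℝ) (𝓕 V) s = 𝓕 (𝓕 V) s := rfl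
    _ = 𝓕⁻ (𝓕 V) (-s) := by rw [Real.fourierInv_eq_fourier_neg, neg_neg]
    _ = V (-s) := by rw [hinv]

lemma p_integral (h : ℝ) (hh : 0 < h) (f g : SchwartzMap ℝ ℂ) (q : ℝ) :
    ∫ p : ℝ, wigner h (⇑f) q p * wigner h (⇑g) q p =
      (1 / (2 * ↑π) : ℂ) * ∫ s : ℝ, T (h / 2) f f q s * T (h / 2) g g q (-s) := by
  have hc : 0 < h / 2 := by linarith
  set c := h / 2 with hcdef
  have hrw : (fun p : ℝ => wigner h (⇑f) q p * wigner h (⇑g) q p) =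
      fun p : ℝ => (1 / (2 * ↑π) : ℂ) ^ 2 *
        (𝓕 (T c f f q) (-p / (2 * π)) * 𝓕 (T c g g q) (-p / (2 * π))) := by
    funext p
    rw [wigner_eq, wigner_eq]
    ring
  rw [hrw, integral_const_mul]
  rw [parseval_aux (T c f f q) (T c g g q) (T_integrable c hc f f q)
    (T_integrable c hc g g q) (T_cont c g g q) (fourier_T_integrable c hc g g q)]
  rw [Complex.real_smul]
  have hπ : (↑π : ℂ) ≠ 0 := Complex.ofReal_ne_zero.mpr Real.pi_ne_zero
  push_cast
  field_simp

lemma schwartz_bd (f : SchwartzMap ℝ ℂ) : ∃ C, 0 ≤ C ∧ ∀ x : ℝ, ‖f x‖ ≤ C := by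
  obtain ⟨C, hC, hb⟩ := decay4 f
  refine ⟨C, hC, fun x => ?_⟩
  have h1 : (1:ℝ) ≤ (1 + x ^ 2) ^ 2 := by nlinarith [sq_nonneg x]
  nlinarith [hb x, norm_nonneg (f x)]

lemma schwartz_bd1 (f : SchwartzMap ℝ ℂ) :
    ∃ C, 0 ≤ C ∧ ∀ x : ℝ, ‖f x‖ ≤ C * (1 + x ^ 2)⁻¹ := by
  obtain ⟨C, hC, hb⟩ := decay4 f
  refine ⟨C, hC, fun x => ?_⟩
  have h1 : (1 + x ^ 2) ≤ (1 + x ^ 2) ^ 2 := by nlinarith [sq_nonneg x]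
  have h2 : ‖f x‖ * (1 + x ^ 2) ≤ C := by nlinarith [hb x, norm_nonneg (f x)]
  have hpos : (0:ℝ) < 1 + x ^ 2 := by positivity
  calc ‖f x‖ = ‖f x‖ * (1 + x ^ 2) * (1 + x ^ 2)⁻¹ := by field_simp
    _ ≤ C * (1 + x ^ 2)⁻¹ := by gcongr

lemma prod_integrable (f g : SchwartzMap ℝ ℂ) (F : ℝ → ℂ)
    (hF : ∀ x, ‖F x‖ = ‖f x‖ * ‖g x‖) (hFc : Continuous F) : Integrable F := by
  obtain ⟨Cf, hCf, hf⟩ := schwartz_bd f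
  obtain ⟨Cg, hCg, hg⟩ := schwartz_bd1 g
  have hbase : Integrable (fun x : ℝ => Cf * Cg * (1 + x ^ 2)⁻¹) :=
    integrable_inv_one_add_sq.const_mul _
  refine Integrable.mono' hbase hFc.aestronglyMeasurable ?_
  filter_upwards with x
  rw [hF x]
  calc ‖f x‖ * ‖g x‖ ≤ Cf * (Cg * (1 + x ^ 2)⁻¹) :=
      mul_le_mul (hf x) (hg x) (norm_nonneg _) hCf
    _ = Cf * Cg * (1 + x ^ 2)⁻¹ := by ring

lemma qs_integral (c : ℝ) (hc : 0 < c) (f g : SchwartzMap ℝ ℂ)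
    (horth : ∫ x : ℝ, (starRingEnd ℂ) (f x) * g x = 0) :
    ∫ q : ℝ, ∫ s : ℝ, T c f f q s * T c g g q (-s) = 0 := by
  set G : ℝ → ℂ := fun x => (starRingEnd ℂ) (f x) * g x with hGdef
  set H : ℝ → ℂ := fun x => f x * (starRingEnd ℂ) (g x) with hHdef
  have hGc : Continuous G := (Complex.continuous_conj.comp f.continuous).mul g.continuous
  have hHc : Continuous H := f.continuous.mul (Complex.continuous_conj.comp g.continuous)
  have hGint : Integrable G := prod_integrable f g G
    (fun x => by rw [hGdef]; simp [norm_mul]) hGc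
  have hHint : Integrable H := prod_integrable f g H
    (fun x => by rw [hHdef]; simp [norm_mul, mul_comm]) hHc
  -- rewrite integrand
  have hpt : ∀ q s : ℝ, T c f f q s * T c g g q (-s) = G (q + c * s) * H (q - c * s) := by
    intro q s
    simp only [T, hGdef, hHdef, mul_neg, mul_comm, mul_left_comm, mul_assoc]
    rw [show q + -(c * s) = q - c * s by ring, show q - -(c * s) = q + c * s by ring]
    ring
  simp_rw [hpt]
  -- swap q and s
  obtain ⟨Cf, hCf0, hbf⟩ := T_bound c hc f g
  obtain ⟨Mf, hMf0, hmf⟩ := schwartz_bd f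
  obtain ⟨Mg, hMg0, hmg⟩ := schwartz_bd g
  have hswap1 : Integrable (Function.uncurry fun q s : ℝ => G (q + c * s) * H (q - c * s))
      (volume.prod volume) := by
    have hbase : Integrable (fun z : ℝ × ℝ =>
        (Mf * Mg * Cf) * ((1 + z.1 ^ 2)⁻¹ * (1 + z.2 ^ 2)⁻¹)) (volume.prod volume) :=
      (integrable_inv_one_add_sq.mul_prod integrable_inv_one_add_sq).const_mul _
    have hcont : Continuous (Function.uncurry fun q s : ℝ => G (q + c * s) * H (q - c * s)) := by
      apply Continuous.mul
      · exact hGc.comp (by continuity)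
      · exact hHc.comp (by continuity)
    refine Integrable.mono' hbase hcont.aestronglyMeasurable ?_
    filter_upwards with z
    obtain ⟨q, s⟩ := z
    have : ‖G (q + c * s) * H (q - c * s)‖ =
        (‖g (q + c * s)‖ * ‖f (q - c * s)‖) * (‖f (q + c * s)‖ * ‖g (q - c * s)‖) := by
      simp only [hGdef, hHdef, norm_mul, RCLike.norm_conj]
      ring
    rw [Function.uncurry_apply_pair, this]
    have h1 : ‖f (q + c * s)‖ * ‖g (q - c * s)‖ ≤ Cf * ((1 + q ^ 2)⁻¹ * (1 + s ^ 2)⁻¹) := by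
      have := hbf q s; rwa [T_norm] at this
    have h2 : ‖g (q + c * s)‖ * ‖f (q - c * s)‖ ≤ Mg * Mf :=
      mul_le_mul (hmg _) (hmf _) (norm_nonneg _) hMg0
    calc (‖g (q + c * s)‖ * ‖f (q - c * s)‖) * (‖f (q + c * s)‖ * ‖g (q - c * s)‖)
        ≤ (Mg * Mf) * (Cf * ((1 + q ^ 2)⁻¹ * (1 + s ^ 2)⁻¹)) := by
          apply mul_le_mul h2 h1 (by positivity) (by positivity)
      _ = (Mf * Mg * Cf) * ((1 + q ^ 2)⁻¹ * (1 + s ^ 2)⁻¹) := by ring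
  rw [integral_integral_swap hswap1]
  -- shift in q
  have hshift : ∀ s : ℝ, (∫ q : ℝ, G (q + c * s) * H (q - c * s)) =
      ∫ x : ℝ, G x * H (x - 2 * (c * s)) := by
    intro s
    have : (fun q : ℝ => G (q + c * s) * H (q - c * s)) =
        fun q : ℝ => G (q + c * s) * H ((q + c * s) - 2 * (c * s)) := by
      funext q; rw [show q + c * s - 2 * (c * s) = q - c * s by ring]
    rw [this]
    exact integral_add_right_eq_self (fun x => G x * H (x - 2 * (c * s))) (c * s)
  simp_rw [hshift]
  -- scale in s : inner integral is Φ (2 c s) with Φ a = ∫ x, G x * H (x - a)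
  set Φ : ℝ → ℂ := fun a => ∫ x : ℝ, G x * H (x - a) with hΦdef
  have hscale : ∫ s : ℝ, Φ (2 * c * s) = |(2 * c)⁻¹| • ∫ a : ℝ, Φ a := by
    simpa using Measure.integral_comp_mul_left Φ (2 * c)
  have hstep : (∫ s : ℝ, ∫ x : ℝ, G x * H (x - 2 * (c * s))) = |(2 * c)⁻¹| • ∫ a : ℝ, Φ a := by
    rw [← hscale]
    refine integral_congr_ae (Filter.Eventually.of_forall fun s => ?_)
    simp [hΦdef, mul_assoc]
  rw [hstep]
  -- now compute ∫ a, Φ a = 0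
  have hH' : Integrable (fun y : ℝ => H (-y)) := hHint.comp_neg
  have hconvint : Integrable (Function.uncurry fun a x : ℝ => G x * H (x - a))
      (volume.prod volume) := by
    have := hGint.convolution_integrand (ContinuousLinearMap.mul ℝ ℂ) hH'
    refine this.congr (Filter.Eventually.of_forall fun p => ?_)
    obtain ⟨a, x⟩ := p
    simp only [ContinuousLinearMap.mul_apply', Function.uncurry_apply_pair, neg_sub]
  have : (∫ a : ℝ, Φ a) = 0 := by
    rw [hΦdef]
    rw [integral_integral_swap hconvint]
    have hinner : ∀ x : ℝ, (∫ a : ℝ, G x * H (x - a)) = G x * ∫ y : ℝ, H y := by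
      intro x
      rw [integral_const_mul, integral_sub_left_eq_self H volume x]
    simp_rw [hinner]
    rw [integral_mul_const, horth]
    simp
  rw [this, smul_zero]

lemma wigner_bound (h : ℝ) (hh : 0 < h) (f : SchwartzMap ℝ ℂ) :
    ∃ C, 0 ≤ C ∧ ∀ q p : ℝ,
      ‖wigner h (⇑f) q p‖ ≤ C * ((1 + q ^ 2)⁻¹ * (1 + (-p / (2 * π)) ^ 2)⁻¹) := by
  have hc : 0 < h / 2 := by linarith
  obtain ⟨C, hC0, hb⟩ := fourier_T_bound (h / 2) hc f f
  refine ⟨1 / (2 * π) * C, by positivity, fun q p => ?_⟩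
  rw [wigner_eq, norm_mul]
  have hnc : ‖(1 / (2 * ↑π) : ℂ)‖ = 1 / (2 * π) := by
    rw [norm_div, norm_one, norm_mul]
    simp [abs_of_pos Real.pi_pos]
  rw [hnc, mul_assoc]
  exact mul_le_mul_of_nonneg_left (hb q (-p / (2 * π))) (by positivity)

lemma wigner_aesm (h : ℝ) (f : SchwartzMap ℝ ℂ) :
    AEStronglyMeasurable (fun z : ℝ × ℝ => wigner h (⇑f) z.2 z.1)
      (volume.prod volume) := by
  have hcont : Continuous (fun w : (ℝ × ℝ) × ℝ =>
      (starRingEnd ℂ) (f (w.1.2 + h * w.2 / 2)) * f (w.1.2 - h * w.2 / 2) *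
        Complex.exp (Complex.I * (w.1.1 : ℂ) * (w.2 : ℂ))) := by
    have c1 : Continuous fun w : (ℝ × ℝ) × ℝ => w.1.2 + h * w.2 / 2 :=
      continuous_fst.snd.add ((continuous_const.mul continuous_snd).div_const 2)
    have c2 : Continuous fun w : (ℝ × ℝ) × ℝ => w.1.2 - h * w.2 / 2 :=
      continuous_fst.snd.sub ((continuous_const.mul continuous_snd).div_const 2)
    have c3 : Continuous fun w : (ℝ × ℝ) × ℝ => Complex.I * (w.1.1 : ℂ) * (w.2 : ℂ) :=
      (continuous_const.mul (Complex.continuous_ofReal.comp continuous_fst.fst)).mul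
        (Complex.continuous_ofReal.comp continuous_snd)
    exact ((Complex.continuous_conj.comp (f.continuous.comp c1)).mul
      (f.continuous.comp c2)).mul (Complex.continuous_exp.comp c3)
  have hsm : StronglyMeasurable (fun z : ℝ × ℝ =>
      ∫ s : ℝ, (starRingEnd ℂ) (f (z.2 + h * s / 2)) * f (z.2 - h * s / 2) *
        Complex.exp (Complex.I * (z.1 : ℂ) * (s : ℂ))) :=
    hcont.stronglyMeasurable.integral_prod_right'
  exact (stronglyMeasurable_const.mul hsm).aestronglyMeasurable

end WigAux

open WigAux

/-- For `ℏ > 0` and Schwartz functions `ψ, φ` that are orthogonal in `L²(ℝ)`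
(`∫ conj(ψ(x)) φ(x) dx = 0`), their Wigner functions are orthogonal in phase space:
`∫∫ W_ψ(q,p) W_φ(q,p) dq dp = 0`. -/
theorem stmt_18 (ℏ : ℝ) (hℏ : 0 < ℏ) (ψ φ : SchwartzMap ℝ ℂ)
    (horth : ∫ x : ℝ, (starRingEnd ℂ) (ψ x) * φ x = 0) :
    ∫ p : ℝ, ∫ q : ℝ, wigner ℏ ψ q p * wigner ℏ φ q p = 0 := by
  have hc : 0 < ℏ / 2 := by linarith
  obtain ⟨Cψ, hCψ, hbψ⟩ := wigner_bound ℏ hℏ ψ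
  obtain ⟨Cφ, hCφ, hbφ⟩ := wigner_bound ℏ hℏ φ
  have hm : AEStronglyMeasurable
      (Function.uncurry fun p q : ℝ => wigner ℏ (⇑ψ) q p * wigner ℏ (⇑φ) q p)
      (volume.prod volume) := (wigner_aesm ℏ ψ).mul (wigner_aesm ℏ φ)
  -- integrable base function
  have hRne : (-(2 * π)⁻¹ : ℝ) ≠ 0 := by
    simp [Real.pi_ne_zero]
  have hJ : Integrable (fun p : ℝ => (1 + (-p / (2 * π)) ^ 2)⁻¹) := by
    have := (integrable_comp_mul_left_iff (fun y : ℝ => (1 + y ^ 2)⁻¹) hRne).2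
      integrable_inv_one_add_sq
    refine this.congr (Filter.Eventually.of_forall fun p => ?_)
    show (1 + (-(2 * π)⁻¹ * p) ^ 2)⁻¹ = (1 + (-p / (2 * π)) ^ 2)⁻¹
    rw [show -(2 * π)⁻¹ * p = -p / (2 * π) by ring]
  have hbase : Integrable (fun z : ℝ × ℝ =>
      (Cψ * Cφ) * ((1 + (-z.1 / (2 * π)) ^ 2)⁻¹ * (1 + z.2 ^ 2)⁻¹)) (volume.prod volume) :=
    (hJ.mul_prod integrable_inv_one_add_sq).const_mul _
  have hint : Integrable
      (Function.uncurry fun p q : ℝ => wigner ℏ (⇑ψ) q p * wigner ℏ (⇑φ) q p)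
      (volume.prod volume) := by
    refine Integrable.mono' hbase hm ?_
    filter_upwards with z
    obtain ⟨p, q⟩ := z
    rw [Function.uncurry_apply_pair, norm_mul]
    have h1 := hbψ q p
    have h2 : ‖wigner ℏ (⇑φ) q p‖ ≤ Cφ := by
      refine (hbφ q p).trans ?_
      have hq : (1 + q ^ 2)⁻¹ ≤ 1 := by
        rw [inv_le_one_iff₀]; right; nlinarith [sq_nonneg q]
      have hp : (1 + (-p / (2 * π)) ^ 2)⁻¹ ≤ 1 := by
        rw [inv_le_one_iff₀]; right; nlinarith [sq_nonneg (-p / (2 * π))]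
      calc Cφ * ((1 + q ^ 2)⁻¹ * (1 + (-p / (2 * π)) ^ 2)⁻¹) ≤ Cφ * (1 * 1) := by
            apply mul_le_mul_of_nonneg_left _ hCφ
            exact mul_le_mul hq hp (by positivity) one_pos.le
        _ = Cφ := by ring
    calc ‖wigner ℏ (⇑ψ) q p‖ * ‖wigner ℏ (⇑φ) q p‖
        ≤ (Cψ * ((1 + q ^ 2)⁻¹ * (1 + (-p / (2 * π)) ^ 2)⁻¹)) * Cφ :=
          mul_le_mul h1 h2 (norm_nonneg _) (by positivity)
      _ = (Cψ * Cφ) * ((1 + (-p / (2 * π)) ^ 2)⁻¹ * (1 + q ^ 2)⁻¹) := by ring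
  rw [integral_integral_swap hint]
  have hp_int : ∀ q : ℝ, ∫ p : ℝ, wigner ℏ (⇑ψ) q p * wigner ℏ (⇑φ) q p =
      (1 / (2 * ↑π) : ℂ) * ∫ s : ℝ, T (ℏ / 2) ψ ψ q s * T (ℏ / 2) φ φ q (-s) :=
    fun q => p_integral ℏ hℏ ψ φ q
  simp_rw [hp_int]
  rw [integral_const_mul, qs_integral (ℏ / 2) hc ψ φ horth, mul_zero]
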